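/- Let p > 0 and 0 ≤ τ₁ ≤ τ₂, and let X and Y be independent ℕ-valued random variables with X Poisson-distributed with parameter τ₁ p and Y Poisson-distributed with parameter (τ₂ − τ₁) p. Set m = τ₂ p · 1{X + Y = 0} − τ₁ p · 1{X = 0}. Then for every integer k ≥ 1, E |m − E m|^k ≤ 4^k · k! · P(Y > 0) = 4^k · k! · (1 − e^{−(τ₂ − τ₁) p}). -/

import Mathlib

open Filter Topology Real MeasureTheory ProbabilityTheory

/-- For `k ≥ 1` and `x ≥ 0`, `x^k e^{-x} ≤ k! (1 - e^{-x})`. -/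
lemma aux_pow_exp_le (k : ℕ) (hk : 1 ≤ k) {x : ℝ} (hx : 0 ≤ x) :
    x ^ k * Real.exp (-x) ≤ (k.factorial : ℝ) * (1 - Real.exp (-x)) := by
  have hfac : (0:ℝ) < k.factorial := by positivity
  have h1 : 1 + x ^ k / (k.factorial : ℝ) ≤ Real.exp x := by
    have hsub : ({0, k} : Finset ℕ) ⊆ Finset.range (k + 1) := by
      intro i hi
      simp only [Finset.mem_insert, Finset.mem_singleton] at hi
      rcases hi with rfl | rfl <;> simp [Nat.lt_succ_iff]
    have hsum : ∑ i ∈ ({0, k} : Finset ℕ), x ^ i / i.factorial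
        ≤ ∑ i ∈ Finset.range (k + 1), x ^ i / i.factorial :=
      Finset.sum_le_sum_of_subset_of_nonneg hsub (fun i _ _ => by positivity)
    have hpair : ∑ i ∈ ({0, k} : Finset ℕ), x ^ i / (i.factorial : ℝ)
        = 1 + x ^ k / (k.factorial : ℝ) := by
      rw [Finset.sum_pair (by omega : (0:ℕ) ≠ k)]
      simp
    calc 1 + x ^ k / (k.factorial : ℝ) = _ := hpair.symm
      _ ≤ _ := hsum
      _ ≤ Real.exp x := Real.sum_le_exp_of_nonneg hx _
  have hex : (0:ℝ) < Real.exp (-x) := Real.exp_pos _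
  have h2 : x ^ k ≤ (Real.exp x - 1) * (k.factorial : ℝ) :=
    (div_le_iff₀ hfac).1 (by linarith)
  have h3 : (k.factorial : ℝ) * (Real.exp x * Real.exp (-x)) = (k.factorial : ℝ) := by
    rw [← Real.exp_add]; simp
  have w := mul_le_mul_of_nonneg_right h2 hex.le
  nlinarith only [w, h3]

set_option maxHeartbeats 1000000 in
/-- Inequality (5) of the paper: if `X ~ Poisson(τ₁ p)` and `Y ~ Poisson((τ₂ − τ₁) p)` are
independent and `m = τ₂ p 1{X + Y = 0} − τ₁ p 1{X = 0}`, then for every `k ≥ 1`,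
`E|m − Em|^k ≤ 4^k k! P(Y > 0) = 4^k k! (1 − e^{−(τ₂ − τ₁) p})`. -/
theorem missing_mass_single_urn_moment_bound
    {Ω : Type*} [MeasurableSpace Ω] (P : Measure Ω) [IsProbabilityMeasure P]
    (p τ₁ τ₂ : ℝ) (hp : 0 < p) (hτ₁ : 0 ≤ τ₁) (hτ : τ₁ ≤ τ₂)
    (X Y : Ω → ℕ) (hX_meas : Measurable X) (hY_meas : Measurable Y)
    (h_indep : IndepFun X Y P)
    (hX : ∀ k : ℕ, (P {ω | X ω = k}).toReal
      = Real.exp (-(τ₁ * p)) * (τ₁ * p) ^ k / k.factorial)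
    (hY : ∀ k : ℕ, (P {ω | Y ω = k}).toReal
      = Real.exp (-((τ₂ - τ₁) * p)) * ((τ₂ - τ₁) * p) ^ k / k.factorial)
    (m : Ω → ℝ)
    (hm : ∀ ω, m ω = τ₂ * p * (if X ω + Y ω = 0 then (1 : ℝ) else 0)
      - τ₁ * p * (if X ω = 0 then (1 : ℝ) else 0)) :
    ∀ k : ℕ, 1 ≤ k →
      (∫ ω, |m ω - ∫ ω', m ω' ∂P| ^ k ∂P)
          ≤ (4 : ℝ) ^ k * (k.factorial : ℝ) * (P {ω | 0 < Y ω}).toReal ∧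
      (4 : ℝ) ^ k * (k.factorial : ℝ) * (P {ω | 0 < Y ω}).toReal
          = (4 : ℝ) ^ k * (k.factorial : ℝ) * (1 - Real.exp (-((τ₂ - τ₁) * p))) := by
  intro k hk
  have ha : 0 ≤ τ₁ * p := mul_nonneg hτ₁ hp.le
  have hb : 0 ≤ (τ₂ - τ₁) * p := mul_nonneg (by linarith) hp.le
  set a := τ₁ * p with ha_def
  set b := (τ₂ - τ₁) * p with hb_def
  set ea := Real.exp (-a) with hea_def
  set eb := Real.exp (-b) with heb_def
  have hea : (0:ℝ) < ea := Real.exp_pos _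
  have heb : (0:ℝ) < eb := Real.exp_pos _
  have hea1 : ea ≤ 1 := Real.exp_le_one_iff.2 (by linarith)
  have heb1 : eb ≤ 1 := Real.exp_le_one_iff.2 (by linarith)
  set q := 1 - eb with hq_def
  have hq : 0 ≤ q := by simp [hq_def]; linarith
  have hq1 : q ≤ 1 := by simp [hq_def]; linarith
  -- measurable sets
  have m0 : MeasurableSet ({0} : Set ℕ) := measurableSet_singleton 0
  have hSX : MeasurableSet (X ⁻¹' {0}) := hX_meas m0
  have hSY : MeasurableSet (Y ⁻¹' {0}) := hY_meas m0
  have hA : MeasurableSet (X ⁻¹' {0} ∩ Y ⁻¹' {0}) := hSX.inter hSY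
  have hB : MeasurableSet (X ⁻¹' {0} ∩ (Y ⁻¹' {0})ᶜ) := hSX.inter hSY.compl
  have hC : MeasurableSet ((X ⁻¹' {0})ᶜ) := hSX.compl
  -- basic probabilities
  have hsetX : X ⁻¹' {0} = {ω | X ω = 0} := rfl
  have hsetY : Y ⁻¹' {0} = {ω | Y ω = 0} := rfl
  have hPX0 : (P (X ⁻¹' {0})).toReal = ea := by
    rw [hsetX]; simpa using hX 0
  have hPY0 : (P (Y ⁻¹' {0})).toReal = eb := by
    rw [hsetY]; simpa using hY 0
  have hPYc : (P ((Y ⁻¹' {0})ᶜ)).toReal = q := by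
    rw [prob_compl_eq_one_sub hSY,
      ENNReal.toReal_sub_of_le prob_le_one ENNReal.one_ne_top,
      ENNReal.toReal_one, hPY0]
  have hPXc : (P ((X ⁻¹' {0})ᶜ)).toReal = 1 - ea := by
    rw [prob_compl_eq_one_sub hSX,
      ENNReal.toReal_sub_of_le prob_le_one ENNReal.one_ne_top,
      ENNReal.toReal_one, hPX0]
  have hPA : (P (X ⁻¹' {0} ∩ Y ⁻¹' {0})).toReal = ea * eb := by
    rw [h_indep.measure_inter_preimage_eq_mul _ _ m0 m0, ENNReal.toReal_mul,
      hPX0, hPY0]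
  have hPB : (P (X ⁻¹' {0} ∩ (Y ⁻¹' {0})ᶜ)).toReal = ea * q := by
    have : X ⁻¹' {0} ∩ (Y ⁻¹' {0})ᶜ = X ⁻¹' {0} ∩ Y ⁻¹' ({0}ᶜ) := rfl
    rw [this, h_indep.measure_inter_preimage_eq_mul _ _ m0 m0.compl,
      ENNReal.toReal_mul, hPX0]
    have : Y ⁻¹' ({0}ᶜ : Set ℕ) = (Y ⁻¹' {0})ᶜ := rfl
    rw [this, hPYc]
  have hPpos : (P {ω | 0 < Y ω}).toReal = q := by
    have hset : {ω | 0 < Y ω} = (Y ⁻¹' {0})ᶜ := by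
      ext ω; simp [Nat.pos_iff_ne_zero]
    rw [hset, hPYc]
  refine ⟨?_, by rw [hPpos]⟩
  -- compute the mean
  have hm' : m = fun ω => (X ⁻¹' {0} ∩ Y ⁻¹' {0}).indicator (fun _ => τ₂ * p) ω
      - (X ⁻¹' {0}).indicator (fun _ => a) ω := by
    funext ω
    rw [hm ω]
    by_cases hx : X ω = 0 <;> by_cases hy : Y ω = 0
    · have h1 : ω ∈ X ⁻¹' {0} ∩ Y ⁻¹' {0} := by simp [hx, hy]
      have h2 : ω ∈ X ⁻¹' {0} := by simp [hx]
      rw [if_pos (by omega), if_pos hx, Set.indicator_of_mem h1,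
        Set.indicator_of_mem h2]
      ring
    · have h1 : ω ∉ X ⁻¹' {0} ∩ Y ⁻¹' {0} := by simp [hy]
      have h2 : ω ∈ X ⁻¹' {0} := by simp [hx]
      rw [if_neg (by omega), if_pos hx, Set.indicator_of_notMem h1,
        Set.indicator_of_mem h2]
      ring
    · have h1 : ω ∉ X ⁻¹' {0} ∩ Y ⁻¹' {0} := by simp [hx]
      have h2 : ω ∉ X ⁻¹' {0} := by simp [hx]
      rw [if_neg (by omega), if_neg hx, Set.indicator_of_notMem h1,
        Set.indicator_of_notMem h2]
      ring
    · have h1 : ω ∉ X ⁻¹' {0} ∩ Y ⁻¹' {0} := by simp [hx]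
      have h2 : ω ∉ X ⁻¹' {0} := by simp [hx]
      rw [if_neg (by omega), if_neg hx, Set.indicator_of_notMem h1,
        Set.indicator_of_notMem h2]
      ring
  have hintA : Integrable ((X ⁻¹' {0} ∩ Y ⁻¹' {0}).indicator (fun _ => τ₂ * p)) P :=
    (integrable_const _).indicator hA
  have hintS : Integrable ((X ⁻¹' {0}).indicator (fun _ => a)) P :=
    (integrable_const _).indicator hSX
  have hμ : (∫ ω', m ω' ∂P) = τ₂ * p * (ea * eb) - a * ea := by
    rw [hm', integral_sub hintA hintS, integral_indicator_const _ hA,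
      integral_indicator_const _ hSX, measureReal_def, measureReal_def, hPA, hPX0, smul_eq_mul, smul_eq_mul]
    ring
  rw [hμ, hPpos]
  set μ := τ₂ * p * (ea * eb) - a * ea with hμ_def
  have hab : τ₂ * p = a + b := by rw [ha_def, hb_def]; ring
  -- |μ| ≤ 2q
  have hbe : b * eb ≤ 1 * (1 - eb) := by
    simpa using aux_pow_exp_le 1 le_rfl hb
  have hae : a * ea ≤ 1 * (1 - ea) := by
    simpa using aux_pow_exp_le 1 le_rfl ha
  have hμ2 : |μ| ≤ 2 * q := by
    have hμeq : μ = ea * (b * eb) - ea * (a * q) := by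
      rw [hμ_def, hab, hq_def]; ring
    rw [abs_le]; constructor
    · rw [hμeq]
      have w1 := mul_le_mul_of_nonneg_right (show a * ea ≤ 1 by linarith) hq
      have w2 : 0 ≤ ea * (b * eb) := mul_nonneg hea.le (mul_nonneg hb heb.le)
      nlinarith only [w1, w2, hq]
    · rw [hμeq]
      have w1 : 0 ≤ ea * (a * q) := mul_nonneg hea.le (mul_nonneg ha hq)
      have w2 := mul_le_mul_of_nonneg_right hea1 (mul_nonneg hb heb.le)
      nlinarith only [w1, w2, hbe, hq_def, hq]
  -- the integrand as a simple function
  have hgeq : (fun ω => |m ω - μ| ^ k)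
      = fun ω => (X ⁻¹' {0} ∩ Y ⁻¹' {0}).indicator (fun _ => |b - μ| ^ k) ω
        + (X ⁻¹' {0} ∩ (Y ⁻¹' {0})ᶜ).indicator (fun _ => |a + μ| ^ k) ω
        + ((X ⁻¹' {0})ᶜ).indicator (fun _ => |μ| ^ k) ω := by
    funext ω
    by_cases hx : X ω = 0 <;> by_cases hy : Y ω = 0
    · have hmv : m ω - μ = b - μ := by
        rw [hm ω, if_pos (by omega), if_pos hx, hab]; ring
      have h1 : ω ∈ X ⁻¹' {0} ∩ Y ⁻¹' {0} := by simp [hx, hy]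
      have h2 : ω ∉ X ⁻¹' {0} ∩ (Y ⁻¹' {0})ᶜ := by simp [hy]
      have h3 : ω ∉ (X ⁻¹' {0})ᶜ := by simp [hx]
      rw [hmv, Set.indicator_of_mem h1, Set.indicator_of_notMem h2,
        Set.indicator_of_notMem h3]
      ring
    · have hmv : m ω - μ = -(a + μ) := by
        rw [hm ω, if_neg (by omega), if_pos hx]; ring
      have h1 : ω ∉ X ⁻¹' {0} ∩ Y ⁻¹' {0} := by simp [hy]
      have h2 : ω ∈ X ⁻¹' {0} ∩ (Y ⁻¹' {0})ᶜ := by simp [hx, hy]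
      have h3 : ω ∉ (X ⁻¹' {0})ᶜ := by simp [hx]
      rw [hmv, abs_neg, Set.indicator_of_notMem h1, Set.indicator_of_mem h2,
        Set.indicator_of_notMem h3]
      ring
    · have hmv : m ω - μ = -μ := by
        rw [hm ω, if_neg (by omega), if_neg hx]; ring
      have h1 : ω ∉ X ⁻¹' {0} ∩ Y ⁻¹' {0} := by simp [hx]
      have h2 : ω ∉ X ⁻¹' {0} ∩ (Y ⁻¹' {0})ᶜ := by simp [hx]
      have h3 : ω ∈ (X ⁻¹' {0})ᶜ := by simp [hx]
      rw [hmv, abs_neg, Set.indicator_of_notMem h1, Set.indicator_of_notMem h2,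
        Set.indicator_of_mem h3]
      ring
    · have hmv : m ω - μ = -μ := by
        rw [hm ω, if_neg (by omega), if_neg hx]; ring
      have h1 : ω ∉ X ⁻¹' {0} ∩ Y ⁻¹' {0} := by simp [hx]
      have h2 : ω ∉ X ⁻¹' {0} ∩ (Y ⁻¹' {0})ᶜ := by simp [hx]
      have h3 : ω ∈ (X ⁻¹' {0})ᶜ := by simp [hx]
      rw [hmv, abs_neg, Set.indicator_of_notMem h1, Set.indicator_of_notMem h2,
        Set.indicator_of_mem h3]
      ring
  have hintcA : Integrable ((X ⁻¹' {0} ∩ Y ⁻¹' {0}).indicator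
      (fun _ => |b - μ| ^ k)) P := (integrable_const _).indicator hA
  have hintcB : Integrable ((X ⁻¹' {0} ∩ (Y ⁻¹' {0})ᶜ).indicator
      (fun _ => |a + μ| ^ k)) P := (integrable_const _).indicator hB
  have hintcC : Integrable (((X ⁻¹' {0})ᶜ).indicator (fun _ => |μ| ^ k)) P :=
    (integrable_const _).indicator hC
  have hint : (∫ ω, |m ω - μ| ^ k ∂P)
      = |b - μ| ^ k * (ea * eb) + |a + μ| ^ k * (ea * q) + |μ| ^ k * (1 - ea) := by
    have h12 : Integrable (fun ω => (X ⁻¹' {0} ∩ Y ⁻¹' {0}).indicator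
        (fun _ => |b - μ| ^ k) ω
        + (X ⁻¹' {0} ∩ (Y ⁻¹' {0})ᶜ).indicator (fun _ => |a + μ| ^ k) ω) P :=
      hintcA.add hintcB
    rw [hgeq, integral_add h12 hintcC, integral_add hintcA hintcB,
      integral_indicator_const _ hA, integral_indicator_const _ hB,
      integral_indicator_const _ hC, measureReal_def, measureReal_def,
      measureReal_def, hPA, hPB, hPXc, smul_eq_mul, smul_eq_mul,
      smul_eq_mul]
    ring
  rw [hint]
  -- now a purely real-analytic estimate
  set K := (2:ℝ) ^ (k - 1) with hK_def
  set T := (2:ℝ) ^ k with hT_def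
  set F := (k.factorial : ℝ) with hF_def
  set M := |μ| ^ k with hM_def
  have hKpos : (0:ℝ) < K := pow_pos (by norm_num) _
  have hK1 : (1:ℝ) ≤ K := one_le_pow₀ (by norm_num)
  have hK2 : 2 * K = T := by
    rw [hK_def, hT_def, ← pow_succ', Nat.sub_add_cancel hk]
  have hT2 : (2:ℝ) ≤ T := by
    calc (2:ℝ) = 2 ^ 1 := (pow_one 2).symm
    _ ≤ T := pow_le_pow_right₀ (by norm_num) hk
  have hF1 : (1:ℝ) ≤ F := by
    rw [hF_def]; exact_mod_cast Nat.one_le_iff_ne_zero.2 k.factorial_ne_zero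
  have h4T : (4:ℝ) ^ k = T * T := by
    rw [hT_def, ← mul_pow]; norm_num
  have hS1 : |b - μ| ^ k ≤ K * (b ^ k + M) := by
    calc |b - μ| ^ k ≤ (b + |μ|) ^ k := by
          apply pow_le_pow_left₀ (abs_nonneg _)
          calc |b - μ| ≤ |b| + |μ| := abs_sub _ _
            _ = b + |μ| := by rw [abs_of_nonneg hb]
      _ ≤ K * (b ^ k + M) := add_pow_le hb (abs_nonneg _) k
  have hS2 : |a + μ| ^ k ≤ K * (a ^ k + M) := by
    calc |a + μ| ^ k ≤ (a + |μ|) ^ k := by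
          apply pow_le_pow_left₀ (abs_nonneg _)
          calc |a + μ| ≤ |a| + |μ| := abs_add_le _ _
            _ = a + |μ| := by rw [abs_of_nonneg ha]
      _ ≤ K * (a ^ k + M) := add_pow_le ha (abs_nonneg _) k
  have hMnn : 0 ≤ M := pow_nonneg (abs_nonneg _) k
  have hbk : b ^ k * eb ≤ F * q := by
    have := aux_pow_exp_le k hk hb
    rw [← heb_def, ← hq_def] at this
    exact this
  have hak : a ^ k * ea ≤ F := by
    have h := aux_pow_exp_le k hk ha
    rw [← hea_def, ← hF_def] at h
    have hFnn : (0:ℝ) ≤ F := by linarith only [hF1]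
    have w : 0 ≤ F * ea := mul_nonneg hFnn hea.le
    nlinarith only [h, w]
  have hMq : M ≤ T * q := by
    have h1 : M ≤ (2 * q) ^ k := pow_le_pow_left₀ (abs_nonneg _) hμ2 k
    have h2 : (2 * q) ^ k = T * q ^ k := by rw [mul_pow, hT_def]
    have h3 : q ^ k ≤ q := pow_le_of_le_one hq hq1 (by omega)
    calc M ≤ T * q ^ k := by rw [← h2]; exact h1
      _ ≤ T * q := by
        have hTnn : (0:ℝ) ≤ T := by linarith
        exact mul_le_mul_of_nonneg_left h3 hTnn
  -- combine
  have heaeb : 0 ≤ ea * eb := mul_nonneg hea.le heb.le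
  have heaq : 0 ≤ ea * q := mul_nonneg hea.le hq
  have h1ea : 0 ≤ 1 - ea := by linarith
  have step1 : |b - μ| ^ k * (ea * eb) + |a + μ| ^ k * (ea * q) + M * (1 - ea)
      ≤ K * (b ^ k + M) * (ea * eb) + K * (a ^ k + M) * (ea * q)
        + K * M * (1 - ea) := by
    have t1 := mul_le_mul_of_nonneg_right hS1 heaeb
    have t2 := mul_le_mul_of_nonneg_right hS2 heaq
    have t3 : M * (1 - ea) ≤ K * M * (1 - ea) := by
      have w := mul_le_mul_of_nonneg_right hK1 (mul_nonneg hMnn h1ea)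
      nlinarith only [w]
    linarith only [t1, t2, t3]
  have step2 : K * (b ^ k + M) * (ea * eb) + K * (a ^ k + M) * (ea * q)
        + K * M * (1 - ea)
      = K * ((b ^ k * eb) * ea) + K * ((a ^ k * ea) * q) + K * M := by
    rw [hq_def]; ring
  have step3 : K * ((b ^ k * eb) * ea) + K * ((a ^ k * ea) * q) + K * M
      ≤ K * (F * q) + K * (F * q) + K * (T * q) := by
    have u1 : (b ^ k * eb) * ea ≤ F * q := by
      have w := mul_le_mul_of_nonneg_left hea1 (mul_nonneg (pow_nonneg hb k) heb.le)
      nlinarith only [w, hbk]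
    have u2 : (a ^ k * ea) * q ≤ F * q :=
      mul_le_mul_of_nonneg_right hak hq
    have v1 := mul_le_mul_of_nonneg_left u1 hKpos.le
    have v2 := mul_le_mul_of_nonneg_left u2 hKpos.le
    have v3 := mul_le_mul_of_nonneg_left hMq hKpos.le
    linarith only [v1, v2, v3]
  have step4 : K * (F * q) + K * (F * q) + K * (T * q) ≤ 4 ^ k * F * q := by
    have hKT : K = T / 2 := by linarith only [hK2]
    rw [h4T, hKT]
    have h0 : 0 ≤ (F - 1) * (T - 2) :=
      mul_nonneg (by linarith only [hF1]) (by linarith only [hT2])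
    have h5 : F + T / 2 ≤ T * F := by nlinarith only [h0, hF1, hT2]
    have h6 : T * (F + T / 2) ≤ T * (T * F) :=
      mul_le_mul_of_nonneg_left h5 (by linarith only [hT2])
    have h7 : T * F + T * T / 2 ≤ T * T * F := by nlinarith only [h6]
    have h8 := mul_le_mul_of_nonneg_right h7 hq
    nlinarith only [h8]
  linarith only [step1, step2, step3, step4]
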